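/- arXiv:1809.06759 — 2 statements merged into one kernel-verified Lean document; each statement's English description precedes it below -/
import Mathlib

section
/- Let T be the prae-dilator with T_X = {⊥} ∪ X ∪ {Ω+x : x ∈ X} as described. If X is a linear order and ϑ : T_X → X is a Bachmann-Howard collapse, then there is an order embedding f : ω^ω → X; it can be defined by recursion via f(0) = ϑ(⊥), f(β+1) = ϑ(f(β)), and f(ω·β) = ϑ(Ω+f(β)) for 0 < β with ω·β < ω^ω. -/
universe u

/-- A prae-dilator: an endofunctor of the category of linear orders (with order
embeddings as morphisms), together with a natural family of support functions. -/
structure PraeDilator : Type (u + 1) where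
  obj : LinOrd.{u} → LinOrd.{u}
  map : {X Y : LinOrd.{u}} → (↥X ↪o ↥Y) → (↥(obj X) ↪o ↥(obj Y))
  map_id : ∀ (X : LinOrd.{u}) (σ : ↥(obj X)),
    map (OrderIso.refl ↥X).toOrderEmbedding σ = σ
  map_comp : ∀ {X Y Z : LinOrd.{u}} (f : ↥X ↪o ↥Y) (g : ↥Y ↪o ↥Z) (σ : ↥(obj X)),
    map (f.trans g) σ = map g (map f σ)
  supp : {X : LinOrd.{u}} → ↥(obj X) → Finset ↥X
  supp_natural : ∀ {X Y : LinOrd.{u}} (f : ↥X ↪o ↥Y) (σ : ↥(obj X)),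
    supp (map f σ) = (supp σ).map f.toEmbedding
  supp_spec : ∀ {X : LinOrd.{u}} (σ : ↥(obj X)),
    ∃ σ₀ : ↥(obj (LinOrd.of {x : ↥X // x ∈ supp σ})),
      map (OrderEmbedding.subtype (· ∈ supp σ)) σ₀ = σ

/-- A dilator is a prae-dilator that preserves well-foundedness. -/
def PraeDilator.IsDilator (T : PraeDilator.{u}) : Prop :=
  ∀ X : LinOrd.{u}, WellFounded ((· < ·) : ↥X → ↥X → Prop) →
    WellFounded ((· < ·) : ↥(T.obj X) → ↥(T.obj X) → Prop)

/-- A Bachmann-Howard collapse `ϑ : T_X → X`. -/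
def PraeDilator.IsBHCollapse (T : PraeDilator.{u}) (X : LinOrd.{u})
    (ϑ : ↥(T.obj X) → ↥X) : Prop :=
  (∀ σ τ : ↥(T.obj X), σ < τ → (∀ x ∈ T.supp σ, x < ϑ τ) → ϑ σ < ϑ τ) ∧
  (∀ σ : ↥(T.obj X), ∀ x ∈ T.supp σ, x < ϑ σ)

/-- `X` is a Bachmann-Howard fixed point of `T`. -/
def PraeDilator.IsBHFixedPoint (T : PraeDilator.{u}) (X : LinOrd.{u}) : Prop :=
  ∃ ϑ : ↥(T.obj X) → ↥X, T.IsBHCollapse X ϑ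

noncomputable section

open Ordinal

/-- The carrier of `T_X = {⊥} ∪ X ∪ {Ω + x | x ∈ X}`, realized as
`WithBot (X ⊕ₗ X)`: `⊥` is the bottom element, `Sum.inl x` is `x` and
`Sum.inr x` is `Ω + x`. -/
def TCar (X : LinOrd.{0}) : Type := WithBot (↥X ⊕ₗ ↥X)

instance (X : LinOrd.{0}) : LinearOrder (TCar X) :=
  inferInstanceAs (LinearOrder (WithBot (↥X ⊕ₗ ↥X)))

instance (X : LinOrd.{0}) : Bot (TCar X) :=
  inferInstanceAs (Bot (WithBot (↥X ⊕ₗ ↥X)))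

def TObj (X : LinOrd.{0}) : LinOrd.{0} := LinOrd.of (TCar X)

/-- The action of `T` on an order embedding `f`: `⊥ ↦ ⊥`, `x ↦ f x`,
`Ω + x ↦ Ω + f x`. -/
def Tmap {X Y : LinOrd.{0}} (f : ↥X ↪o ↥Y) : ↥(TObj X) ↪o ↥(TObj Y) :=
  OrderEmbedding.ofStrictMono
    (fun σ => (WithBot.map (fun a => toLex (Sum.map f f (ofLex a))) σ : TCar Y))
    (by
      have hg : StrictMono (fun a : ↥X ⊕ₗ ↥X => (toLex (Sum.map f f (ofLex a)) : ↥Y ⊕ₗ ↥Y)) := by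
        intro a b h
        rw [Sum.Lex.lt_def] at h
        rw [show ∀ c d : ↥Y ⊕ₗ ↥Y, (c < d) = Sum.Lex (· < ·) (· < ·) (ofLex c) (ofLex d) from
          fun _ _ => rfl]
        cases h with
        | inl h => exact Sum.Lex.inl (f.strictMono h)
        | inr h => exact Sum.Lex.inr (f.strictMono h)
        | sep => exact Sum.Lex.sep _ _
      exact hg.withBot_map)

/-- Supports: `supp ⊥ = ∅`, `supp x = supp (Ω + x) = {x}`. -/
def Tsupp {X : LinOrd.{0}} : ↥(TObj X) → Finset ↥X :=
  WithBot.recBotCoe ∅ (fun a => Sum.elim (fun x => {x}) (fun x => {x}) (ofLex a))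

/-- The prae-dilator `T` with `T_X = 1 + X + X`. -/
def T0 : PraeDilator.{0} where
  obj := TObj
  map := Tmap
  map_id := by
    intro X σ
    induction σ using WithBot.recBotCoe with
    | bot => rfl
    | coe a =>
      rw [← toLex_ofLex a]
      rcases ofLex a with x | x
      · rfl
      · rfl
  map_comp := by
    intro X Y Z f g σ
    induction σ using WithBot.recBotCoe with
    | bot => rfl
    | coe a =>
      rw [← toLex_ofLex a]
      rcases ofLex a with x | x
      · rfl
      · rfl
  supp := Tsupp
  supp_natural := by
    intro X Y f σ
    induction σ using WithBot.recBotCoe with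
    | bot => rfl
    | coe a =>
      rw [← toLex_ofLex a]
      rcases ofLex a with x | x
      · exact (Finset.map_singleton _ _).symm
      · exact (Finset.map_singleton _ _).symm
  supp_spec := by
    intro X σ
    induction σ using WithBot.recBotCoe with
    | bot => exact ⟨show TCar _ from ⊥, rfl⟩
    | coe a =>
      rw [← toLex_ofLex a]
      rcases ofLex a with x | x
      · refine ⟨(Option.some (toLex (Sum.inl
            (⟨x, Finset.mem_singleton_self x⟩ : {y : ↥X // y ∈ ({x} : Finset ↥X)}))) :
            WithBot ({y : ↥X // y ∈ ({x} : Finset ↥X)} ⊕ₗ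
              {y : ↥X // y ∈ ({x} : Finset ↥X)})), ?_⟩
        rfl
      · refine ⟨(Option.some (toLex (Sum.inr
            (⟨x, Finset.mem_singleton_self x⟩ : {y : ↥X // y ∈ ({x} : Finset ↥X)}))) :
            WithBot ({y : ↥X // y ∈ ({x} : Finset ↥X)} ⊕ₗ
              {y : ↥X // y ∈ ({x} : Finset ↥X)})), ?_⟩
        rfl

/-- The well-order `ω^ω`. -/
def X0 : LinOrd.{0} := LinOrd.of (omega0 ^ omega0).ToType

def eIso : Set.Iio (omega0 ^ omega0) ≃o (omega0 ^ omega0).ToType :=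
  Ordinal.ToType.mk

lemma aux0 : (0 : Ordinal) < omega0 ^ omega0 :=
  opow_pos _ omega0_pos

lemma auxsucc {β : Ordinal} (h : β < omega0 ^ omega0) : β + 1 < omega0 ^ omega0 :=
  principal_add_omega0_opow _ h
    (by
      calc (1 : Ordinal) < omega0 := one_lt_omega0
        _ ≤ omega0 ^ omega0 := left_le_opow _ omega0_pos)

lemma auxmul {β : Ordinal} (h : β < omega0 ^ omega0) :
    omega0 * (β + 1) < omega0 ^ omega0 := by
  have hω : omega0 < omega0 ^ omega0 := by
    conv_lhs => rw [← opow_one omega0]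
    exact (opow_lt_opow_iff_right one_lt_omega0).2 one_lt_omega0
  have hp := principal_mul_omega0_opow_opow 1
  rw [opow_one] at hp
  exact hp hω (auxsucc h)

section Construction

variable (X : LinOrd.{0}) (ϑ : ↥(T0.obj X) → ↥X)

/-- The recursively defined function `g : Ordinal → X`. -/
noncomputable def gfun : Ordinal → ↥X := fun β =>
  if _h0 : β = 0 then ϑ (show TCar X from ⊥)
  else if _hs : Ordinal.pred β < β then
    ϑ (Option.some (toLex ((Sum.inl (gfun (Ordinal.pred β))) : ↥X ⊕ ↥X)) : WithBot (↥X ⊕ₗ ↥X))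
  else if _hl : β / Ordinal.omega0 < β then
    ϑ (Option.some (toLex ((Sum.inr (gfun (β / Ordinal.omega0))) : ↥X ⊕ ↥X)) : WithBot (↥X ⊕ₗ ↥X))
  else ϑ (show TCar X from ⊥)
termination_by β => β

lemma gfun_zero : gfun X ϑ 0 = ϑ (show TCar X from ⊥) := by
  rw [gfun, dif_pos rfl]

lemma gfun_succ (β : Ordinal) :
    gfun X ϑ (Order.succ β) =
      ϑ (Option.some (toLex ((Sum.inl (gfun X ϑ β)) : ↥X ⊕ ↥X)) : WithBot (↥X ⊕ₗ ↥X)) := by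
  have h0 : Order.succ β ≠ 0 := Order.succ_ne_bot β
  have hp : Ordinal.pred (Order.succ β) = β := Ordinal.pred_succ β
  have hs : Ordinal.pred (Order.succ β) < Order.succ β := by
    rw [hp]; exact Order.lt_succ β
  rw [gfun, dif_neg h0, dif_pos hs, hp]

lemma gfun_limit {β : Ordinal} (h : Order.IsSuccLimit β) (hd : β / Ordinal.omega0 < β) :
    gfun X ϑ β =
      ϑ (Option.some (toLex ((Sum.inr (gfun X ϑ (β / Ordinal.omega0))) : ↥X ⊕ ↥X)) :
        WithBot (↥X ⊕ₗ ↥X)) := by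
  have h0 : β ≠ 0 := h.pos.ne'
  have hns : ¬ Ordinal.pred β < β := by
    have : Ordinal.pred β = β := by
      exact Ordinal.pred_eq_iff_isSuccPrelimit.2 h.isSuccPrelimit
    rw [this]
    exact lt_irrefl β
  rw [gfun, dif_neg h0, dif_neg hns, dif_pos hd]

end Construction

open Ordinal in
lemma lt_omega0_mul_self {β : Ordinal} (h0 : β ≠ 0) (hβ : β < omega0 ^ omega0) :
    β < omega0 * β := by
  rcases lt_or_eq_of_le (le_mul_right β omega0_pos) with h | h
  · exact h
  · exfalso
    have : omega0 ^ omega0 ∣ β := mul_eq_right_iff_opow_omega0_dvd.1 h.symm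
    exact absurd (Ordinal.le_of_dvd h0 this) (not_le.2 hβ)

open Ordinal in
lemma limit_div_facts {β : Ordinal} (h : Order.IsSuccLimit β) (hβ : β < omega0 ^ omega0) :
    0 < β / omega0 ∧ β / omega0 < β ∧ omega0 * (β / omega0) = β := by
  obtain ⟨c, rfl⟩ := (isSuccLimit_iff_omega0_dvd.1 h).2
  have hc : omega0 * c / omega0 = c := mul_div_cancel c omega0_ne_zero
  have hc0 : c ≠ 0 := by
    rintro rfl
    rw [mul_zero] at h
    exact h.pos.ne' rfl
  have hclt : c < omega0 ^ omega0 :=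
    lt_of_le_of_lt (le_mul_right c omega0_pos) hβ
  refine ⟨?_, ?_, ?_⟩
  · rw [hc]; exact pos_iff_ne_zero.2 hc0
  · rw [hc]; exact lt_omega0_mul_self hc0 hclt
  · rw [hc]

section Mono

variable (X : LinOrd.{0}) (ϑ : ↥(T0.obj X) → ↥X) (hϑ : T0.IsBHCollapse X ϑ)

open Ordinal

lemma Tcar_bot_lt (a : ↥X ⊕ₗ ↥X) :
    @LT.lt ↥(T0.obj X) _ (show TCar X from ⊥)
      (Option.some a : WithBot (↥X ⊕ₗ ↥X)) :=
  WithBot.bot_lt_coe a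

lemma Tcar_inl_lt_inr (x y : ↥X) :
    @LT.lt ↥(T0.obj X) _
      (Option.some (toLex ((Sum.inl x) : ↥X ⊕ ↥X)) : WithBot (↥X ⊕ₗ ↥X))
      (Option.some (toLex ((Sum.inr y) : ↥X ⊕ ↥X)) : WithBot (↥X ⊕ₗ ↥X)) :=
  WithBot.coe_lt_coe.2 (Sum.Lex.sep x y)

lemma Tcar_inr_lt_inr {x y : ↥X} (h : x < y) :
    @LT.lt ↥(T0.obj X) _
      (Option.some (toLex ((Sum.inr x) : ↥X ⊕ ↥X)) : WithBot (↥X ⊕ₗ ↥X))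
      (Option.some (toLex ((Sum.inr y) : ↥X ⊕ ↥X)) : WithBot (↥X ⊕ₗ ↥X)) :=
  WithBot.coe_lt_coe.2 (Sum.Lex.inr h)

lemma supp_bot : T0.supp (X := X) (show TCar X from ⊥) = ∅ := rfl

lemma supp_inl (x : ↥X) :
    T0.supp (X := X)
      ((Option.some (toLex ((Sum.inl x) : ↥X ⊕ ↥X)) : WithBot (↥X ⊕ₗ ↥X)) : ↥(T0.obj X)) =
      {x} := rfl

lemma supp_inr (x : ↥X) :
    T0.supp (X := X)
      ((Option.some (toLex ((Sum.inr x) : ↥X ⊕ ↥X)) : WithBot (↥X ⊕ₗ ↥X)) : ↥(T0.obj X)) =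
      {x} := rfl

include hϑ in
lemma gfun_strictMono :
    ∀ γ : Ordinal, γ < omega0 ^ omega0 → ∀ β < γ, gfun X ϑ β < gfun X ϑ γ := by
  intro γ
  induction γ using Ordinal.induction with
  | h γ IH =>
    intro hγ β hβγ
    rcases Ordinal.zero_or_succ_or_isSuccLimit γ with rfl | ⟨a, rfl⟩ | hlim
    · exact absurd hβγ (not_lt_zero (a := β))
    · -- successor case
      rw [gfun_succ]
      have key : gfun X ϑ a <
          ϑ (Option.some (toLex ((Sum.inl (gfun X ϑ a)) : ↥X ⊕ ↥X)) : WithBot (↥X ⊕ₗ ↥X)) := by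
        refine hϑ.2 (Option.some (toLex ((Sum.inl (gfun X ϑ a)) : ↥X ⊕ ↥X)) :
          WithBot (↥X ⊕ₗ ↥X)) (gfun X ϑ a) ?_
        rw [supp_inl]; exact Finset.mem_singleton_self _
      have ha : a < omega0 ^ omega0 := lt_trans (Order.lt_succ a) hγ
      rcases lt_or_eq_of_le (Order.lt_succ_iff.1 hβγ) with hba | rfl
      · exact lt_trans (IH a (Order.lt_succ a) ha β hba) key
      · exact key
    · -- limit case
      obtain ⟨hc0, hclt, hcm⟩ := limit_div_facts hlim hγ
      rw [gfun_limit X ϑ hlim hclt]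
      have inner : ∀ β, β < γ →
          gfun X ϑ β <
            ϑ (Option.some (toLex ((Sum.inr (gfun X ϑ (γ / omega0))) : ↥X ⊕ ↥X)) :
              WithBot (↥X ⊕ₗ ↥X)) := by
        intro β
        induction β using Ordinal.induction with
        | h β IH2 =>
          intro hβγ
          rcases Ordinal.zero_or_succ_or_isSuccLimit β with rfl | ⟨b, rfl⟩ | hblim
          · rw [gfun_zero]
            refine hϑ.1 _ _ (Tcar_bot_lt X _) ?_
            intro x hx
            rw [supp_bot] at hx
            exact absurd hx (Finset.notMem_empty x)
          · rw [gfun_succ]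
            refine hϑ.1 _ _ (Tcar_inl_lt_inr X _ _) ?_
            intro x hx
            rw [supp_inl, Finset.mem_singleton] at hx
            subst hx
            exact IH2 b (Order.lt_succ b) (lt_trans (Order.lt_succ b) hβγ)
          · have hβω : β < omega0 ^ omega0 := lt_trans hβγ hγ
            obtain ⟨hb0, hblt, hbm⟩ := limit_div_facts hblim hβω
            rw [gfun_limit X ϑ hblim hblt]
            have hbc : β / omega0 < γ / omega0 := by
              by_contra hle
              push_neg at hle
              have h2 : omega0 * (γ / omega0) ≤ omega0 * (β / omega0) :=
                mul_le_mul_right hle omega0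
              rw [hbm, hcm] at h2
              exact absurd hβγ (not_lt.2 h2)
            have hgb : gfun X ϑ (β / omega0) < gfun X ϑ (γ / omega0) := by
              have hcω : γ / omega0 < omega0 ^ omega0 := lt_trans hclt hγ
              exact IH (γ / omega0) hclt hcω (β / omega0) hbc
            refine hϑ.1 _ _ (Tcar_inr_lt_inr X hgb) ?_
            intro x hx
            rw [supp_inr, Finset.mem_singleton] at hx
            subst hx
            exact IH2 (β / omega0) hblt (lt_trans hblt hβγ)
      exact inner β hβγ

end Mono


/-- from any Bachmann-Howard collapse `ϑ : T_X → X` for the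
prae-dilator `T` with `T_X = 1 + X + X` one obtains an order embedding of
`ω^ω` into `X`, defined by recursion via `f(0) = ϑ(⊥)`, `f(β+1) = ϑ(f(β))` and
`f(ω·β) = ϑ(Ω + f(β))` for `0 < β`. -/
theorem stmt_1 (X : LinOrd.{0}) (ϑ : ↥(T0.obj X) → ↥X)
    (hϑ : T0.IsBHCollapse X ϑ) :
    ∃ f : ↥X0 ↪o ↥X,
      (f (eIso ⟨0, aux0⟩) = ϑ (show TCar X from ⊥)) ∧
      (∀ (β : Ordinal) (hβ : β < omega0 ^ omega0),
        f (eIso ⟨β + 1, auxsucc hβ⟩) =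
          ϑ (Option.some (toLex ((Sum.inl (f (eIso ⟨β, hβ⟩))) : ↥X ⊕ ↥X)) : WithBot (↥X ⊕ₗ ↥X))) ∧
      (∀ (β : Ordinal) (hβ : β < omega0 ^ omega0), 0 < β →
        ∀ hm : omega0 * β < omega0 ^ omega0,
          f (eIso ⟨omega0 * β, hm⟩) =
            ϑ (Option.some (toLex ((Sum.inr (f (eIso ⟨β, hβ⟩))) : ↥X ⊕ ↥X)) : WithBot (↥X ⊕ₗ ↥X))) := by
  have mono := gfun_strictMono X ϑ hϑ
  have hsm : StrictMono
      (fun t : ↥X0 => gfun X ϑ ((eIso.symm t : Set.Iio (omega0 ^ omega0)) : Ordinal)) := by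
    intro t t' h
    have h2 : eIso.symm t < eIso.symm t' := eIso.symm.strictMono h
    exact mono ((eIso.symm t' : Set.Iio (omega0 ^ omega0)) : Ordinal) (eIso.symm t').2
      ((eIso.symm t : Set.Iio (omega0 ^ omega0)) : Ordinal) h2
  set F : ↥X0 ↪o ↥X := OrderEmbedding.ofStrictMono _ hsm with hF
  have fval : ∀ (β : Ordinal) (h : β < omega0 ^ omega0),
      F (eIso ⟨β, h⟩) = gfun X ϑ β := by
    intro β h
    show gfun X ϑ ((eIso.symm (eIso ⟨β, h⟩) : Set.Iio (omega0 ^ omega0)) : Ordinal) = _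
    rw [OrderIso.symm_apply_apply]
  refine ⟨F, ?_, ?_, ?_⟩
  · rw [fval 0 aux0]
    exact gfun_zero X ϑ
  · intro β hβ
    rw [fval _ (auxsucc hβ), fval β hβ, add_one_eq_succ, gfun_succ]
  · intro β hβ hβ0 hm
    rw [fval _ hm, fval β hβ]
    have hlim : Order.IsSuccLimit (omega0 * β) :=
      isSuccLimit_iff_omega0_dvd.2
        ⟨mul_ne_zero omega0_ne_zero hβ0.ne', dvd_mul_right _ _⟩
    have hdiv : omega0 * β / omega0 = β := mul_div_cancel β omega0_ne_zero
    have hlt : omega0 * β / omega0 < omega0 * β := by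
      rw [hdiv]; exact lt_omega0_mul_self hβ0.ne' hβ
    rw [gfun_limit X ϑ hlim hlt, hdiv]


end
end

section
/- Let (T, supp^T) be a dilator and let κ be an uncountable regular cardinal such that for every ordinal β < κ the well-order T_β (the value of T at β regarded as a well-order) has cardinality less than κ. Then κ is a Bachmann-Howard fixed point of T, i.e. there exists a Bachmann-Howard collapse ϑ : T_κ → κ; it can be defined by recursion along the well-order T_κ via ϑ(τ) = min{β < κ : C(τ,β) ⊆ β}, where C(τ,β) = supp^T_κ(τ) ∪ {ϑ(σ) : σ <_{T_κ} τ and supp^T_κ(σ) ⊆ β}. -/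
universe u

open Cardinal Ordinal in
/-- Cardinality bound: the set of `σ ∈ T_κ` with support below `β < κ` has size `< κ`. -/
lemma aux_card (T : PraeDilator.{0}) (κ : Cardinal.{0})
    (hsmall : ∀ β : Ordinal.{0}, β < κ.ord →
      Cardinal.mk ↥(T.obj (LinOrd.of β.ToType)) < κ)
    (β : Ordinal.{0}) (hβ : β < κ.ord) :
    Cardinal.mk {σ : ↥(T.obj (LinOrd.of κ.ord.ToType)) //
      ∀ x ∈ T.supp σ, (((Ordinal.ToType.mk (o := κ.ord))).symm x : Ordinal) < β} < κ := by
  set e := (Ordinal.ToType.mk (o := κ.ord)) with he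
  set P : ↥(LinOrd.of κ.ord.ToType) → Prop := fun x => ((e.symm x : Ordinal)) < β with hP
  -- order iso between the initial segment `P` and `β.ToType`
  let f : {x : ↥(LinOrd.of κ.ord.ToType) // P x} → β.ToType :=
    fun x => (Ordinal.ToType.mk (o := β)) ⟨(e.symm x.1 : Ordinal), x.2⟩
  have hmono : StrictMono f := by
    intro a b hab
    apply ((Ordinal.ToType.mk (o := β))).strictMono
    show ((e.symm a.1 : Ordinal)) < (e.symm b.1 : Ordinal)
    exact Subtype.coe_lt_coe.2 (e.symm.strictMono (Subtype.coe_lt_coe.2 hab))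
  have hsurj : Function.Surjective f := by
    intro y
    set γ := ((Ordinal.ToType.mk (o := β))).symm y with hγ
    have hγκ : (γ : Ordinal) < κ.ord := lt_trans γ.2 hβ
    have hpf : P (e ⟨(γ : Ordinal), hγκ⟩) := by
      show ((e.symm (e ⟨(γ : Ordinal), hγκ⟩) : Ordinal)) < β
      rw [e.symm_apply_apply]; exact γ.2
    refine ⟨⟨e ⟨(γ : Ordinal), hγκ⟩, hpf⟩, ?_⟩
    have h1 : f ⟨e ⟨(γ : Ordinal), hγκ⟩, hpf⟩ = (Ordinal.ToType.mk (o := β)) γ := by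
      show (Ordinal.ToType.mk (o := β)) ⟨(e.symm (e ⟨(γ : Ordinal), hγκ⟩) : Ordinal), hpf⟩ = _
      congr 1
      apply Subtype.ext
      show (e.symm (e ⟨(γ : Ordinal), hγκ⟩) : Ordinal) = (γ : Ordinal)
      rw [e.symm_apply_apply]
    rw [h1, hγ, OrderIso.apply_symm_apply]
  let iso : {x : ↥(LinOrd.of κ.ord.ToType) // P x} ≃o β.ToType :=
    hmono.orderIsoOfSurjective f hsurj
  have h1 : Cardinal.mk ↥(T.obj (LinOrd.of {x : ↥(LinOrd.of κ.ord.ToType) // P x}))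
      ≤ Cardinal.mk ↥(T.obj (LinOrd.of β.ToType)) :=
    Cardinal.mk_le_of_injective
      (T.map (X := LinOrd.of {x : ↥(LinOrd.of κ.ord.ToType) // P x})
        (Y := LinOrd.of β.ToType) iso.toOrderEmbedding).injective
  have h2 : {σ : ↥(T.obj (LinOrd.of κ.ord.ToType)) | ∀ x ∈ T.supp σ, P x} ⊆
      Set.range (T.map (X := LinOrd.of {x : ↥(LinOrd.of κ.ord.ToType) // P x})
        (OrderEmbedding.subtype P)) := by
    intro σ hσ
    obtain ⟨σ₀, hσ₀⟩ := T.supp_spec σ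
    let j : {x : ↥(LinOrd.of κ.ord.ToType) // x ∈ T.supp σ} ↪o
        {x : ↥(LinOrd.of κ.ord.ToType) // P x} :=
      OrderEmbedding.ofStrictMono (fun x => ⟨x.1, hσ x.1 x.2⟩)
        (fun a b hab => Subtype.mk_lt_mk.2 (Subtype.coe_lt_coe.2 hab))
    refine ⟨T.map (X := LinOrd.of {x : ↥(LinOrd.of κ.ord.ToType) // x ∈ T.supp σ}) j σ₀, ?_⟩
    rw [← T.map_comp (X := LinOrd.of {x : ↥(LinOrd.of κ.ord.ToType) // x ∈ T.supp σ})
      (Y := LinOrd.of {x : ↥(LinOrd.of κ.ord.ToType) // P x})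
      (Z := LinOrd.of κ.ord.ToType) j (OrderEmbedding.subtype P) σ₀]
    have heq : (OrderEmbedding.subtype (· ∈ T.supp σ) :
        {x : ↥(LinOrd.of κ.ord.ToType) // x ∈ T.supp σ} ↪o ↥(LinOrd.of κ.ord.ToType)) =
        j.trans (OrderEmbedding.subtype P) := by
      ext x; rfl
    rw [← heq]
    exact hσ₀
  calc Cardinal.mk {σ : ↥(T.obj (LinOrd.of κ.ord.ToType)) // ∀ x ∈ T.supp σ, P x}
      ≤ Cardinal.mk (Set.range (T.map (X := LinOrd.of {x : ↥(LinOrd.of κ.ord.ToType) // P x})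
          (OrderEmbedding.subtype P))) := Cardinal.mk_le_mk_of_subset h2
    _ ≤ Cardinal.mk ↥(T.obj (LinOrd.of {x : ↥(LinOrd.of κ.ord.ToType) // P x})) :=
        Cardinal.mk_range_le
    _ ≤ Cardinal.mk ↥(T.obj (LinOrd.of β.ToType)) := h1
    _ < κ := hsmall β hβ

open Cardinal Ordinal in
/-- Closure lemma: below `κ` there is an ordinal closed under supports and collapsing values. -/
lemma aux_closure (T : PraeDilator.{0}) (κ : Cardinal.{0}) (hreg : κ.IsRegular)
    (huncount : Cardinal.aleph0 < κ)
    (hsmall : ∀ β : Ordinal.{0}, β < κ.ord →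
      Cardinal.mk ↥(T.obj (LinOrd.of β.ToType)) < κ)
    (τ : ↥(T.obj (LinOrd.of κ.ord.ToType)))
    (v : ↥(T.obj (LinOrd.of κ.ord.ToType)) → ↥(LinOrd.of κ.ord.ToType)) :
    ∃ β : Ordinal.{0}, β < κ.ord ∧
      (∀ x ∈ T.supp τ, (((Ordinal.ToType.mk (o := κ.ord))).symm x : Ordinal) < β) ∧
      (∀ σ : ↥(T.obj (LinOrd.of κ.ord.ToType)), σ < τ →
        (∀ x ∈ T.supp σ, (((Ordinal.ToType.mk (o := κ.ord))).symm x : Ordinal) < β) →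
        (((Ordinal.ToType.mk (o := κ.ord))).symm (v σ) : Ordinal) < β) := by
  have hlim : Order.IsSuccLimit κ.ord := Cardinal.isSuccLimit_ord huncount.le
  set e := (Ordinal.ToType.mk (o := κ.ord)) with he
  set ordOf : ↥(LinOrd.of κ.ord.ToType) → Ordinal := fun a => ((e.symm a : Ordinal)) with hordOf
  have hordlt : ∀ a, ordOf a < κ.ord := fun a => (e.symm a).2
  let g : ℕ → Ordinal := fun n => Nat.rec
    (⨆ x : {x // x ∈ T.supp τ}, ordOf x.1 + 1)
    (fun _ prev => max prev
      (⨆ σ : {σ : ↥(T.obj (LinOrd.of κ.ord.ToType)) //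
        σ < τ ∧ ∀ x ∈ T.supp σ, ordOf x < prev}, ordOf (v σ.1) + 1)) n
  have hg0 : g 0 = ⨆ x : {x // x ∈ T.supp τ}, ordOf x.1 + 1 := rfl
  have hgsucc : ∀ n, g (n + 1) = max (g n)
      (⨆ σ : {σ : ↥(T.obj (LinOrd.of κ.ord.ToType)) //
        σ < τ ∧ ∀ x ∈ T.supp σ, ordOf x < g n}, ordOf (v σ.1) + 1) := fun n => rfl
  have hlt : ∀ n, g n < κ.ord := by
    intro n
    induction n with
    | zero =>
      rw [hg0]
      apply Ordinal.iSup_lt_ord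
      · rw [hreg.cof_eq]
        exact lt_trans (Cardinal.lt_aleph0_of_finite _) huncount
      · intro x
        rw [Ordinal.add_one_eq_succ]
        exact hlim.succ_lt (hordlt _)
    | succ n ih =>
      rw [hgsucc n]
      apply max_lt ih
      apply Ordinal.iSup_lt_ord
      · rw [hreg.cof_eq]
        refine lt_of_le_of_lt ?_ (aux_card T κ hsmall (g n) ih)
        exact Cardinal.mk_le_of_injective
          (Subtype.impEmbedding _ _ (fun σ h => h.2)).injective
      · intro σ
        rw [Ordinal.add_one_eq_succ]
        exact hlim.succ_lt (hordlt _)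
  have hgmono : Monotone g := monotone_nat_of_le_succ (fun n => by rw [hgsucc n]; exact le_max_left _ _)
  refine ⟨⨆ n, g n, ?_, ?_, ?_⟩
  · apply Ordinal.iSup_lt_ord
    · rw [hreg.cof_eq, Cardinal.mk_nat]; exact huncount
    · exact hlt
  · intro x hx
    have h1 : ordOf x < ordOf x + 1 := by
      rw [Ordinal.add_one_eq_succ]; exact Order.lt_succ _
    have h2 : ordOf x + 1 ≤ g 0 := by
      rw [hg0]; exact Ordinal.le_iSup _ (⟨x, hx⟩ : {x // x ∈ T.supp τ})
    exact lt_of_lt_of_le (lt_of_lt_of_le h1 h2) (Ordinal.le_iSup g 0)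
  · intro σ hστ hs
    -- find a single stage `N` below which all supports of `σ` lie
    have key : ∀ s : Finset ↥(LinOrd.of κ.ord.ToType),
        (∀ x ∈ s, ordOf x < ⨆ n, g n) → ∃ N, ∀ x ∈ s, ordOf x < g N := by
      intro s
      induction s using Finset.induction_on with
      | empty => exact fun _ => ⟨0, by simp⟩
      | @insert a s ha ih =>
        intro h
        obtain ⟨N1, hN1⟩ := ih (fun x hx => h x (Finset.mem_insert_of_mem hx))
        obtain ⟨N2, hN2⟩ := Ordinal.lt_iSup_iff.1 (h a (Finset.mem_insert_self _ _))
        refine ⟨max N1 N2, fun x hx => ?_⟩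
        rcases Finset.mem_insert.1 hx with rfl | hx
        · exact lt_of_lt_of_le hN2 (hgmono (le_max_right _ _))
        · exact lt_of_lt_of_le (hN1 x hx) (hgmono (le_max_left _ _))
    obtain ⟨N, hN⟩ := key (T.supp σ) hs
    have h1 : ordOf (v σ) + 1 ≤ ⨆ σ' : {σ' : ↥(T.obj (LinOrd.of κ.ord.ToType)) //
        σ' < τ ∧ ∀ x ∈ T.supp σ', ordOf x < g N}, ordOf (v σ'.1) + 1 :=
      Ordinal.le_iSup _ (⟨σ, hστ, hN⟩ : {σ' // σ' < τ ∧ ∀ x ∈ T.supp σ', ordOf x < g N})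
    have h2 : ordOf (v σ) < g (N + 1) := by
      rw [hgsucc N]
      refine lt_of_lt_of_le (lt_of_lt_of_le ?_ h1) (le_max_right _ _)
      rw [Ordinal.add_one_eq_succ]; exact Order.lt_succ _
    exact lt_of_lt_of_le h2 (Ordinal.le_iSup g (N + 1))

open Cardinal Ordinal in
/-- a regular uncountable cardinal `κ` such that `T` has values of
cardinality `< κ` at all ordinals `β < κ` is a Bachmann-Howard fixed point of the
dilator `T`, via the collapse `ϑ(τ) = min {β < κ : C(τ,β) ⊆ β}`. -/
theorem stmt_4 (T : PraeDilator.{0}) (hT : T.IsDilator)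
    (κ : Cardinal.{0}) (hreg : κ.IsRegular) (huncount : Cardinal.aleph0 < κ)
    (hsmall : ∀ β : Ordinal.{0}, β < κ.ord →
      Cardinal.mk ↥(T.obj (LinOrd.of β.ToType)) < κ) :
    -- the ordinal `κ` regarded as a well-order
    letI K : LinOrd.{0} := LinOrd.of κ.ord.ToType
    -- `ordOf` identifies elements of that well-order with ordinals `< κ`
    letI ordOf : ↥K → Ordinal.{0} := fun a => (((ToType.mk (o := κ.ord))).symm a : Ordinal)
    ∃ ϑ : ↥(T.obj K) → ↥K,
      T.IsBHCollapse K ϑ ∧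
      ∀ τ : ↥(T.obj K),
        letI C : Ordinal.{0} → Set Ordinal.{0} := fun β =>
          {γ | ∃ x ∈ T.supp τ, γ = ordOf x} ∪
          {γ | ∃ σ : ↥(T.obj K), σ < τ ∧ (∀ x ∈ T.supp σ, ordOf x < β) ∧ γ = ordOf (ϑ σ)}
        ordOf (ϑ τ) = sInf {β : Ordinal.{0} | β < κ.ord ∧ ∀ γ ∈ C β, γ < β} := by
  set K : LinOrd.{0} := LinOrd.of κ.ord.ToType with hK
  set e := (ToType.mk (o := κ.ord)) with he
  set ordOf : ↥K → Ordinal.{0} := fun a => ((e.symm a : Ordinal)) with hordOf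
  have hne : Nonempty ↥K := by
    refine Ordinal.toType_nonempty_iff_ne_zero.2 (fun h0 => ?_)
    have : (ω : Ordinal) ≤ κ.ord := by
      rw [← Cardinal.ord_aleph0]; exact Cardinal.ord_le_ord.2 huncount.le
    rw [h0] at this
    exact absurd (lt_of_lt_of_le Ordinal.omega0_pos this) (lt_irrefl 0)
  have wfK : WellFounded ((· < ·) : ↥K → ↥K → Prop) :=
    (show WellFoundedLT κ.ord.ToType from inferInstance).wf
  have wfT : WellFounded ((· < ·) : ↥(T.obj K) → ↥(T.obj K) → Prop) := hT K wfK
  -- the set of candidate collapsing values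
  let Sset : ↥(T.obj K) → (↥(T.obj K) → ↥K) → Set Ordinal.{0} := fun τ v =>
    {β : Ordinal.{0} | β < κ.ord ∧ ∀ γ ∈
      ({γ | ∃ x ∈ T.supp τ, γ = ordOf x} ∪
       {γ | ∃ σ : ↥(T.obj K), σ < τ ∧ (∀ x ∈ T.supp σ, ordOf x < β) ∧ γ = ordOf (v σ)}), γ < β}
  have Sne : ∀ τ v, (Sset τ v).Nonempty := by
    intro τ v
    obtain ⟨β, hβ, h1, h2⟩ := aux_closure T κ hreg huncount hsmall τ v
    refine ⟨β, hβ, ?_⟩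
    rintro γ (⟨x, hx, rfl⟩ | ⟨σ, hστ, hsupp, rfl⟩)
    · exact h1 x hx
    · exact h2 σ hστ hsupp
  have Sext : ∀ τ (v w : ↥(T.obj K) → ↥K), (∀ σ, σ < τ → v σ = w σ) → Sset τ v = Sset τ w := by
    intro τ v w hvw
    ext β
    simp only [Sset, Set.mem_setOf_eq, Set.mem_union]
    constructor
    · rintro ⟨hβ, h⟩
      refine ⟨hβ, ?_⟩
      rintro γ (hγ | ⟨σ, hστ, hsupp, rfl⟩)
      · exact h γ (Or.inl hγ)
      · rw [← hvw σ hστ]; exact h _ (Or.inr ⟨σ, hστ, hsupp, rfl⟩)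
    · rintro ⟨hβ, h⟩
      refine ⟨hβ, ?_⟩
      rintro γ (hγ | ⟨σ, hστ, hsupp, rfl⟩)
      · exact h γ (Or.inl hγ)
      · rw [hvw σ hστ]; exact h _ (Or.inr ⟨σ, hστ, hsupp, rfl⟩)
  -- define ϑ by recursion along the well-order T_K
  let vext : (τ : ↥(T.obj K)) → ((σ : ↥(T.obj K)) → σ < τ → ↥K) → ↥(T.obj K) → ↥K :=
    fun τ ih σ => if h : σ < τ then ih σ h else Classical.arbitrary _
  let F : (τ : ↥(T.obj K)) → ((σ : ↥(T.obj K)) → σ < τ → ↥K) → ↥K :=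
    fun τ ih => e ⟨sInf (Sset τ (vext τ ih)), (csInf_mem (Sne τ (vext τ ih))).1⟩
  let ϑ : ↥(T.obj K) → ↥K := wfT.fix F
  have hfix : ∀ τ, ϑ τ = F τ (fun σ _ => ϑ σ) := WellFounded.fix_eq wfT F
  have hSeq : ∀ τ, Sset τ (vext τ (fun σ _ => ϑ σ)) = Sset τ ϑ := by
    intro τ
    apply Sext
    intro σ hστ
    simp only [vext, dif_pos hστ]
  have θkey : ∀ τ, ordOf (ϑ τ) = sInf (Sset τ ϑ) := by
    intro τ
    rw [hfix τ]
    show ((e.symm (e _) : Ordinal)) = _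
    rw [e.symm_apply_apply]
    exact congrArg sInf (hSeq τ)
  have θmem : ∀ τ, ordOf (ϑ τ) ∈ Sset τ ϑ := by
    intro τ
    rw [θkey τ]
    exact csInf_mem (Sne τ ϑ)
  have ordlt : ∀ a b : ↥K, ordOf a < ordOf b ↔ a < b := by
    intro a b
    constructor
    · intro h
      exact (OrderIso.lt_iff_lt e.symm).1 (Subtype.coe_lt_coe.1 h)
    · intro h
      exact Subtype.coe_lt_coe.2 ((OrderIso.lt_iff_lt e.symm).2 h)
  refine ⟨ϑ, ⟨?_, ?_⟩, ?_⟩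
  · -- first collapse condition
    intro σ τ hστ hsupp
    have hsupp' : ∀ x ∈ T.supp σ, ordOf x < ordOf (ϑ τ) :=
      fun x hx => (ordlt x (ϑ τ)).2 (hsupp x hx)
    have : ordOf (ϑ σ) < ordOf (ϑ τ) :=
      (θmem τ).2 _ (Or.inr ⟨σ, hστ, hsupp', rfl⟩)
    exact (ordlt _ _).1 this
  · -- second collapse condition
    intro σ x hx
    have : ordOf x < ordOf (ϑ σ) := (θmem σ).2 _ (Or.inl ⟨x, hx, rfl⟩)
    exact (ordlt _ _).1 this
  · intro τ
    exact θkey τ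
end
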